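/- Let 0 ≤ σ < 1/2 and 0 < ε < 1/4. Then there is a constant C > 0 such that for every k ∈ ℤ, ∑_{n∈ℤ} ⟨n+k⟩^{2σ} ⟨n⟩^{-2σ} ⟨k² + (n+k)² + n²⟩^{-(1-2ε)} ≤ C ⟨k⟩^{-(1-4ε)}. -/

import Mathlib

set_option maxHeartbeats 1000000

/-- The Japanese bracket `⟨x⟩ = (1 + x²)^{1/2}`. -/
noncomputable def jb (x : ℝ) : ℝ := Real.sqrt (1 + x ^ 2)

open Real Finset

lemma jb_nonneg (x : ℝ) : 0 ≤ jb x := Real.sqrt_nonneg _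

lemma jb_sq (x : ℝ) : jb x ^ 2 = 1 + x ^ 2 := Real.sq_sqrt (by positivity)

lemma le_of_sq_le_sq' {a b : ℝ} (h : a ^ 2 ≤ b ^ 2) (ha : 0 ≤ a) (hb : 0 ≤ b) : a ≤ b := by
  rw [← Real.sqrt_sq ha, ← Real.sqrt_sq hb]; exact Real.sqrt_le_sqrt h

lemma one_le_jb (x : ℝ) : 1 ≤ jb x :=
  le_of_sq_le_sq' (by rw [jb_sq]; nlinarith [sq_nonneg x]) zero_le_one (jb_nonneg x)

lemma jb_pos (x : ℝ) : 0 < jb x := lt_of_lt_of_le one_pos (one_le_jb x)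

lemma jb_zero : jb 0 = 1 := by simp [jb]

lemma jb_natAbs (n : ℤ) : jb (n : ℝ) = jb (n.natAbs : ℝ) := by
  unfold jb
  congr 1
  have h2 : ((n.natAbs : ℝ)) ^ 2 = ((n : ℝ)) ^ 2 := by
    rw [Nat.cast_natAbs, Int.cast_abs, sq_abs]
  rw [h2]

lemma self_le_jb {x : ℝ} (hx : 0 ≤ x) : x ≤ jb x :=
  le_of_sq_le_sq' (by rw [jb_sq]; nlinarith) hx (jb_nonneg x)

/-- From `X ≤ c * Y` with `X, c > 0`, get `Y⁻¹ ≤ c * X⁻¹`. -/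
lemma inv_le_c_mul_inv {X Y c : ℝ} (hX : 0 < X) (hc : 0 < c) (h : X ≤ c * Y) :
    Y⁻¹ ≤ c * X⁻¹ := by
  have hY : 0 < Y := by
    by_contra hY'
    push_neg at hY'
    nlinarith
  rw [← div_eq_mul_inv, le_div_iff₀ hX, inv_mul_eq_div, div_le_iff₀ hY]
  linarith

/-- Bernoulli-type step inequality: `t * x^(t-1) ≤ x^t - (x-1)^t` for `x ≥ 1`, `0 < t ≤ 1`. -/
lemma step1 {t x : ℝ} (ht0 : 0 < t) (ht1 : t ≤ 1) (hx : 1 ≤ x) :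
    t * x ^ (t - 1) ≤ x ^ t - (x - 1) ^ t := by
  have hx0 : 0 < x := lt_of_lt_of_le one_pos hx
  have h1x : 1 / x ≤ 1 := by rw [div_le_one hx0]; exact hx
  have hber : (1 + -(1 / x)) ^ t ≤ 1 + t * -(1 / x) :=
    rpow_one_add_le_one_add_mul_self (by linarith) ht0.le ht1
  have hfac : x - 1 = x * (1 + -(1 / x)) := by field_simp; ring
  have h2 : (x - 1) ^ t = x ^ t * (1 + -(1 / x)) ^ t := by
    rw [hfac, Real.mul_rpow hx0.le (by linarith)]
  have h3 : (x - 1) ^ t ≤ x ^ t * (1 + t * -(1 / x)) := by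
    rw [h2]
    exact mul_le_mul_of_nonneg_left hber (Real.rpow_nonneg hx0.le t)
  have h4 : x ^ t * (1 + t * -(1 / x)) = x ^ t - t * (x ^ t / x) := by
    field_simp; ring
  have h5 : x ^ (t - 1) = x ^ t / x := by
    rw [Real.rpow_sub hx0, Real.rpow_one]
  rw [h5]
  nlinarith [h3, h4]

/-- Tail step inequality: `s * x^(-s-1) ≤ (x-1)^(-s) - x^(-s)` for `x ≥ 2`, `0 < s ≤ 1`. -/
lemma step2 {s x : ℝ} (hs0 : 0 < s) (hs1 : s ≤ 1) (hx : 2 ≤ x) :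
    s * x ^ (-s - 1) ≤ (x - 1) ^ (-s) - x ^ (-s) := by
  have hx0 : 0 < x := by linarith
  have hy : 0 < 1 / x := by positivity
  have hy2 : 1 / x ≤ 1 / 2 := by
    rw [div_le_div_iff₀ hx0 two_pos]; linarith
  have hsy : s * (1 / x) ≤ 1 / 2 := by nlinarith
  have hsy0 : 0 < s * (1 / x) := by positivity
  have hber : (1 + -(1 / x)) ^ s ≤ 1 + s * -(1 / x) :=
    rpow_one_add_le_one_add_mul_self (by linarith) hs0.le hs1
  have h1y : (0:ℝ) < 1 + -(1 / x) := by linarith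
  have hpos : (0:ℝ) < (1 + -(1 / x)) ^ s := Real.rpow_pos_of_pos h1y s
  have hpos2 : (0:ℝ) < 1 + s * -(1 / x) := by nlinarith
  have hinv : 1 + s * (1 / x) ≤ ((1 + -(1 / x)) ^ s)⁻¹ := by
    have step : (1 + -(1 / x)) ^ s * (1 + s * (1 / x)) ≤ 1 := by
      calc (1 + -(1 / x)) ^ s * (1 + s * (1 / x))
          ≤ (1 + s * -(1 / x)) * (1 + s * (1 / x)) := by
            apply mul_le_mul_of_nonneg_right hber (by nlinarith)
        _ = 1 - (s * (1 / x)) ^ 2 := by ring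
        _ ≤ 1 := by nlinarith [sq_nonneg (s * (1 / x))]
    calc 1 + s * (1 / x)
        = ((1 + -(1 / x)) ^ s)⁻¹ * ((1 + -(1 / x)) ^ s * (1 + s * (1 / x))) := by
          rw [← mul_assoc, inv_mul_cancel₀ hpos.ne', one_mul]
      _ ≤ ((1 + -(1 / x)) ^ s)⁻¹ * 1 :=
          mul_le_mul_of_nonneg_left step (inv_nonneg.mpr hpos.le)
      _ = ((1 + -(1 / x)) ^ s)⁻¹ := mul_one _
  have hfac : x - 1 = x * (1 + -(1 / x)) := by field_simp; ring
  have h2 : (x - 1) ^ (-s) = x ^ (-s) * ((1 + -(1 / x)) ^ s)⁻¹ := by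
    rw [hfac, Real.mul_rpow hx0.le h1y.le, Real.rpow_neg h1y.le]
  have h3 : x ^ (-s) * (1 + s * (1 / x)) ≤ (x - 1) ^ (-s) := by
    rw [h2]
    exact mul_le_mul_of_nonneg_left hinv (Real.rpow_nonneg hx0.le _)
  have h4 : x ^ (-s) * (1 + s * (1 / x)) = x ^ (-s) + s * (x ^ (-s) / x) := by
    field_simp
  have h5 : x ^ (-s - 1) = x ^ (-s) / x := by
    rw [Real.rpow_sub hx0, Real.rpow_one]
  rw [h5]
  nlinarith [h3, h4]

/-- Bound for the "small" region sum. -/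
lemma L1 {t : ℝ} (ht0 : 0 < t) (ht1 : t ≤ 1) (K N : ℕ) :
    ∑ m ∈ Finset.range N, (if m ≤ K then jb (m : ℝ) ^ (t - 1) else 0)
      ≤ 1 + (K : ℝ) ^ t / t := by
  have hK0 : (0:ℝ) ≤ (K:ℝ) ^ t / t := by positivity
  cases N with
  | zero => simpa using by linarith
  | succ M =>
    rw [Finset.sum_range_succ']
    have h0 : (if 0 ≤ K then jb ((0:ℕ) : ℝ) ^ (t - 1) else 0) = 1 := by
      simp [jb_zero]
    rw [h0]
    have key : ∀ i ∈ Finset.range M,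
        (if i + 1 ≤ K then jb ((i + 1 : ℕ) : ℝ) ^ (t - 1) else 0)
          ≤ (((min (i+1) K : ℕ):ℝ) ^ t - ((min i K : ℕ):ℝ) ^ t) / t := by
      intro i _
      by_cases hiK : i + 1 ≤ K
      · rw [if_pos hiK, min_eq_left hiK, min_eq_left (by omega)]
        have hx : (1:ℝ) ≤ ((i:ℝ) + 1) := by linarith [Nat.cast_nonneg (α := ℝ) i]
        have hjb : jb ((i + 1 : ℕ) : ℝ) ^ (t - 1) ≤ ((i:ℝ) + 1) ^ (t - 1) := by
          have h2 : jb ((i + 1 : ℕ) : ℝ) = jb ((i:ℝ) + 1) := by push_cast; ring_nf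
          have h1 : ((i:ℝ) + 1) ≤ jb ((i:ℝ) + 1) := self_le_jb (by positivity)
          rw [h2]
          exact Real.rpow_le_rpow_of_nonpos (by positivity) h1 (by linarith)
        have hmain : ((i:ℝ) + 1) ^ (t - 1) ≤ (((i:ℝ) + 1) ^ t - (i:ℝ) ^ t) / t := by
          rw [le_div_iff₀ ht0]
          calc ((i:ℝ) + 1) ^ (t - 1) * t = t * ((i:ℝ) + 1) ^ (t - 1) := by ring
            _ ≤ ((i:ℝ) + 1) ^ t - ((i:ℝ) + 1 - 1) ^ t := step1 ht0 ht1 hx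
            _ = ((i:ℝ) + 1) ^ t - (i:ℝ) ^ t := by norm_num
        calc jb ((i + 1 : ℕ) : ℝ) ^ (t - 1) ≤ ((i:ℝ) + 1) ^ (t - 1) := hjb
          _ ≤ (((i:ℝ) + 1) ^ t - (i:ℝ) ^ t) / t := hmain
          _ = (((i + 1 : ℕ):ℝ) ^ t - ((i : ℕ):ℝ) ^ t) / t := by push_cast; ring_nf
      · rw [if_neg hiK]
        apply div_nonneg _ ht0.le
        rw [sub_nonneg]
        apply Real.rpow_le_rpow (by positivity) _ ht0.le
        exact_mod_cast Nat.cast_le.mpr (min_le_min (by omega) le_rfl)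
    have tele : ∑ i ∈ Finset.range M,
        ((((min (i+1) K : ℕ):ℝ) ^ t - ((min i K : ℕ):ℝ) ^ t) / t)
        = (((min M K : ℕ):ℝ) ^ t - ((min 0 K : ℕ):ℝ) ^ t) / t := by
      rw [← Finset.sum_div, Finset.sum_range_sub (fun i => ((min i K : ℕ):ℝ) ^ t)]
    have hmin0 : ((min 0 K : ℕ):ℝ) ^ t = 0 := by
      simp [Real.zero_rpow (ne_of_gt ht0)]
    have hminM : ((min M K : ℕ):ℝ) ^ t ≤ (K:ℝ) ^ t := by
      apply Real.rpow_le_rpow (by positivity) _ ht0.le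
      exact_mod_cast Nat.cast_le.mpr (min_le_right M K)
    calc (∑ i ∈ Finset.range M, (if i + 1 ≤ K then jb ((i + 1 : ℕ) : ℝ) ^ (t - 1) else 0)) + 1
        ≤ (∑ i ∈ Finset.range M,
            ((((min (i+1) K : ℕ):ℝ) ^ t - ((min i K : ℕ):ℝ) ^ t) / t)) + 1 :=
          add_le_add_left (Finset.sum_le_sum key) 1
      _ = (((min M K : ℕ):ℝ) ^ t - ((min 0 K : ℕ):ℝ) ^ t) / t + 1 := by rw [tele]
      _ ≤ (K:ℝ) ^ t / t + 1 := by
          rw [hmin0, sub_zero]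
          have : ((min M K : ℕ):ℝ) ^ t / t ≤ (K:ℝ) ^ t / t := by gcongr
          linarith
      _ = 1 + (K : ℝ) ^ t / t := by ring

/-- Bound for the "tail" region sum. -/
lemma L2 {s : ℝ} (hs0 : 0 < s) (hs1 : s ≤ 1) (K N : ℕ) :
    ∑ m ∈ Finset.range N, (if m ≤ K then 0 else jb (m : ℝ) ^ (-(1 + s)))
      ≤ 2 * ((K : ℝ) + 1) ^ (-s) / s := by
  set v : ℕ → ℝ := fun m => ((max m (K+1) : ℕ):ℝ) ^ (-s) with hv
  have hsqrt2 : (1:ℝ) ≤ Real.sqrt 2 := by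
    rw [show (1:ℝ) = Real.sqrt 1 from (Real.sqrt_one).symm]
    exact Real.sqrt_le_sqrt (by norm_num)
  have key : ∀ m ∈ Finset.range N,
      (if m ≤ K then 0 else jb (m : ℝ) ^ (-(1 + s))) ≤ (2 / s) * (v m - v (m+1)) := by
    intro m _
    by_cases hmK : m ≤ K
    · rw [if_pos hmK]
      have h1 : max m (K+1) = K+1 := by omega
      have h2 : max (m+1) (K+1) = K+1 := by omega
      have e1 : v m - v (m+1) = 0 := by simp only [hv]; rw [h1, h2, sub_self]
      rw [e1, mul_zero]
    · rw [if_neg hmK]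
      push_neg at hmK
      have h1 : max m (K+1) = m := by omega
      have h2 : max (m+1) (K+1) = m+1 := by omega
      have hm1' : 1 ≤ m := by omega
      have hmR : (1:ℝ) ≤ (m:ℝ) := by exact_mod_cast hm1'
      have hx : (2:ℝ) ≤ (m:ℝ) + 1 := by linarith
      have hjb_lb : ((m:ℝ) + 1) / Real.sqrt 2 ≤ jb (m : ℝ) := by
        apply le_of_sq_le_sq' _ (by positivity) (jb_nonneg _)
        rw [jb_sq, div_pow, Real.sq_sqrt (by norm_num : (0:ℝ) ≤ 2),
          div_le_iff₀ (by norm_num : (0:ℝ) < 2)]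
        nlinarith [sq_nonneg ((m:ℝ) - 1)]
      have hjb_ub : jb (m : ℝ) ^ (-(1 + s)) ≤ (((m:ℝ) + 1) / Real.sqrt 2) ^ (-(1 + s)) :=
        Real.rpow_le_rpow_of_nonpos (by positivity) hjb_lb (by linarith)
      have hsplit : (((m:ℝ) + 1) / Real.sqrt 2) ^ (-(1 + s))
          = ((m:ℝ) + 1) ^ (-(1 + s)) * (Real.sqrt 2) ^ (1 + s) := by
        rw [div_eq_mul_inv, Real.mul_rpow (by positivity) (by positivity),
          Real.inv_rpow (by positivity), ← Real.rpow_neg (by positivity), neg_neg]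
      have h2le : (Real.sqrt 2) ^ (1 + s) ≤ 2 := by
        calc (Real.sqrt 2) ^ (1 + s) ≤ (Real.sqrt 2) ^ (2:ℝ) :=
            Real.rpow_le_rpow_of_exponent_le hsqrt2 (by linarith)
          _ = 2 := by
            rw [show (2:ℝ) = ((2:ℕ):ℝ) by norm_num, Real.rpow_natCast]
            exact Real.sq_sqrt (by norm_num)
      have hstep := step2 hs0 hs1 hx
      have hstep' : ((m:ℝ) + 1) ^ (-(1 + s)) ≤ (1 / s) * (v m - v (m+1)) := by
        have hv1 : v m = (m:ℝ) ^ (-s) := by simp only [hv, h1]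
        have hv2 : v (m+1) = ((m:ℝ) + 1) ^ (-s) := by
          simp only [hv, h2]; push_cast; ring_nf
        rw [hv1, hv2]
        have heq : ((m:ℝ) + 1) ^ (-(1 + s)) = ((m:ℝ) + 1) ^ (-s - 1) := by ring_nf
        rw [heq, one_div, inv_mul_eq_div, le_div_iff₀ hs0]
        have heq2 : ((m:ℝ) + 1 - 1) = (m:ℝ) := by ring
        rw [heq2] at hstep
        nlinarith [hstep]
      calc jb (m : ℝ) ^ (-(1 + s))
          ≤ ((m:ℝ) + 1) ^ (-(1 + s)) * (Real.sqrt 2) ^ (1 + s) := by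
            rw [← hsplit]; exact hjb_ub
        _ ≤ ((m:ℝ) + 1) ^ (-(1 + s)) * 2 :=
            mul_le_mul_of_nonneg_left h2le (Real.rpow_nonneg (by positivity) _)
        _ = 2 * ((m:ℝ) + 1) ^ (-(1 + s)) := by ring
        _ ≤ 2 * ((1 / s) * (v m - v (m+1))) := by
            apply mul_le_mul_of_nonneg_left hstep' (by norm_num)
        _ = (2 / s) * (v m - v (m+1)) := by ring
  have tele : ∑ m ∈ Finset.range N, (v m - v (m+1)) = v 0 - v N :=
    Finset.sum_range_sub' v N
  have hvN : 0 ≤ v N := Real.rpow_nonneg (by positivity) _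
  have hv0 : v 0 = ((K:ℝ) + 1) ^ (-s) := by
    have h : max 0 (K+1) = K+1 := by omega
    simp only [hv, h]; push_cast; ring_nf
  calc ∑ m ∈ Finset.range N, (if m ≤ K then 0 else jb (m : ℝ) ^ (-(1 + s)))
      ≤ ∑ m ∈ Finset.range N, (2 / s) * (v m - v (m+1)) := Finset.sum_le_sum key
    _ = (2 / s) * (v 0 - v N) := by rw [← Finset.mul_sum, tele]
    _ ≤ (2 / s) * v 0 := by
        apply mul_le_mul_of_nonneg_left (by linarith) (by positivity)
    _ = 2 * ((K : ℝ) + 1) ^ (-s) / s := by rw [hv0]; ring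

/-- A finite sum over `ℤ` of a nonnegative function of `natAbs` is at most twice the
corresponding sum over `ℕ`. -/
lemma sum_natAbs_le (W : ℕ → ℝ) (hW : ∀ m, 0 ≤ W m) (u : Finset ℤ) (N : ℕ)
    (hN : ∀ n ∈ u, n.natAbs < N) :
    ∑ n ∈ u, W n.natAbs ≤ 2 * ∑ m ∈ Finset.range N, W m := by
  rw [← Finset.sum_fiberwise_of_maps_to (g := Int.natAbs)
    (fun n hn => Finset.mem_range.2 (hN n hn)) (fun n => W n.natAbs), Finset.mul_sum]
  apply Finset.sum_le_sum
  intro m _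
  have hsub : {n ∈ u | n.natAbs = m} ⊆ ({(m:ℤ), -(m:ℤ)} : Finset ℤ) := by
    intro n hn
    rw [Finset.mem_filter] at hn
    rcases Int.natAbs_eq n with h | h
    · simp only [Finset.mem_insert, Finset.mem_singleton]
      left; rw [h, hn.2]
    · simp only [Finset.mem_insert, Finset.mem_singleton]
      right; rw [h, hn.2]
  calc ∑ n ∈ {n ∈ u | n.natAbs = m}, W n.natAbs
      ≤ ∑ n ∈ ({(m:ℤ), -(m:ℤ)} : Finset ℤ), W n.natAbs :=
        Finset.sum_le_sum_of_subset_of_nonneg hsub (fun n _ _ => hW n.natAbs)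
    _ ≤ 2 * W m := by
        rcases Nat.eq_zero_or_pos m with hm | hm
        · subst hm
          norm_num [Int.natAbs_zero]
          linarith [hW 0]
        · have hne : (m:ℤ) ≠ -(m:ℤ) := by omega
          rw [Finset.sum_pair hne]
          simp only [Int.natAbs_natCast, Int.natAbs_neg]
          linarith [hW m]

lemma jb_sq_le {a b : ℝ} (hab : a ^ 2 ≤ b) : jb a ^ 2 ≤ Real.sqrt 2 * jb b := by
  have hb : 0 ≤ b := le_trans (sq_nonneg a) hab
  apply le_of_sq_le_sq' _ (sq_nonneg _) (mul_nonneg (Real.sqrt_nonneg _) (jb_nonneg _))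
  rw [mul_pow, Real.sq_sqrt (by norm_num : (0:ℝ) ≤ 2), jb_sq, jb_sq]
  nlinarith [sq_nonneg (a ^ 2 - 1), mul_self_le_mul_self (sq_nonneg a) hab]

/-- diagonal case `m = k` of the bilinear estimate.  For `0 ≤ σ < 1/2` and
`0 < ε < 1/4` there is `C > 0` with
`∑_{n∈ℤ} ⟨n+k⟩^{2σ} ⟨n⟩^{-2σ} ⟨k² + (n+k)² + n²⟩^{-(1-2ε)} ≤ C ⟨k⟩^{-(1-4ε)}` for all `k ∈ ℤ`. -/
theorem stmt12 (σ ε : ℝ) (hσ0 : 0 ≤ σ) (hσ : σ < 1 / 2) (hε0 : 0 < ε) (hε : ε < 1 / 4) :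
    ∃ C : ℝ, 0 < C ∧ ∀ k : ℤ,
      (∑' n : ℤ, jb ((n : ℝ) + (k : ℝ)) ^ (2 * σ) * jb (n : ℝ) ^ (-(2 * σ)) *
          jb ((k : ℝ) ^ 2 + ((n : ℝ) + (k : ℝ)) ^ 2 + (n : ℝ) ^ 2) ^ (-(1 - 2 * ε)))
        ≤ C * jb (k : ℝ) ^ (-(1 - 4 * ε)) := by
  have ht0 : (0:ℝ) < 1 - 2 * σ := by linarith
  have ht1 : (1:ℝ) - 2 * σ ≤ 1 := by linarith
  have hs0 : (0:ℝ) < (1 - 4 * ε) / 2 := by linarith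
  have hs1 : ((1:ℝ) - 4 * ε) / 2 ≤ 1 := by linarith
  set t : ℝ := 1 - 2 * σ with ht_def
  set s : ℝ := (1 - 4 * ε) / 2 with hs_def
  refine ⟨8 * (1 + 1 / t) + 16 / s, by positivity, fun k => ?_⟩
  have hjk0 : 0 < jb (k:ℝ) := jb_pos _
  have hjk1 : (1:ℝ) ≤ jb (k:ℝ) := one_le_jb _
  have hRHS0 : 0 ≤ (8 * (1 + 1 / t) + 16 / s) * jb (k:ℝ) ^ (-(1 - 4 * ε)) :=
    mul_nonneg (by positivity) (Real.rpow_nonneg hjk0.le _)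
  set F := fun n : ℤ => jb ((n : ℝ) + (k : ℝ)) ^ (2 * σ) * jb (n : ℝ) ^ (-(2 * σ)) *
      jb ((k : ℝ) ^ 2 + ((n : ℝ) + (k : ℝ)) ^ 2 + (n : ℝ) ^ 2) ^ (-(1 - 2 * ε)) with hF_def
  by_cases hsum : Summable F
  swap
  · rw [tsum_eq_zero_of_not_summable hsum]; exact hRHS0
  refine Summable.tsum_le_of_sum_le hsum fun u => ?_
  set K : ℕ := k.natAbs with hK_def
  -- basic constants
  have hsq2 : (0:ℝ) ≤ 2 := by norm_num
  have hsqrt2 : (1:ℝ) ≤ Real.sqrt 2 := by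
    rw [show (1:ℝ) = Real.sqrt 1 from (Real.sqrt_one).symm]
    exact Real.sqrt_le_sqrt (by norm_num)
  have hsqrt2sq : (Real.sqrt 2) ^ 2 = 2 := Real.sq_sqrt hsq2
  have hsqrt2le2 : Real.sqrt 2 ≤ 2 :=
    le_of_sq_le_sq' (by rw [hsqrt2sq]; norm_num) (by positivity) hsq2
  have hKk2 : ((K:ℝ))^2 = ((k:ℝ))^2 := by
    rw [hK_def, Nat.cast_natAbs, Int.cast_abs, sq_abs]
  have hKjk : (K:ℝ) ≤ jb (k:ℝ) := by
    apply le_of_sq_le_sq' _ (Nat.cast_nonneg K) (jb_nonneg _)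
    rw [jb_sq, hKk2]; linarith
  have hjkK1 : jb (k:ℝ) ≤ (K:ℝ) + 1 := by
    apply le_of_sq_le_sq' _ (jb_nonneg _) (by positivity)

    rw [jb_sq, ← hKk2]
    nlinarith [Nat.cast_nonneg (α := ℝ) K]
  -- majorant profiles
  set W1 : ℕ → ℝ := fun m => if m ≤ K then jb (m:ℝ) ^ (t - 1) else 0 with hW1_def
  set W2 : ℕ → ℝ := fun m => if m ≤ K then 0 else jb (m:ℝ) ^ (-(1 + s)) with hW2_def
  have hW1nn : ∀ m, 0 ≤ W1 m := by
    intro m; simp only [hW1_def]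
    by_cases h : m ≤ K
    · rw [if_pos h]; exact Real.rpow_nonneg (jb_nonneg _) _
    · rw [if_neg h]
  have hW2nn : ∀ m, 0 ≤ W2 m := by
    intro m; simp only [hW2_def]
    by_cases h : m ≤ K
    · rw [if_pos h]
    · rw [if_neg h]; exact Real.rpow_nonneg (jb_nonneg _) _
  set c1 : ℝ := 4 * jb (k:ℝ) ^ (2*σ - 2 + 4*ε) with hc1_def
  set c2 : ℝ := 4 * jb (k:ℝ) ^ (-s) with hc2_def
  have hc1nn : 0 ≤ c1 := by rw [hc1_def]; exact mul_nonneg (by norm_num) (Real.rpow_nonneg hjk0.le _)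
  have hc2nn : 0 ≤ c2 := by rw [hc2_def]; exact mul_nonneg (by norm_num) (Real.rpow_nonneg hjk0.le _)
  -- pointwise bound
  have hpt : ∀ n : ℤ, F n ≤ c1 * W1 n.natAbs + c2 * W2 n.natAbs := by
    intro n
    have hjn : 0 < jb (n:ℝ) := jb_pos _
    set B : ℝ := (k:ℝ)^2 + ((n:ℝ)+(k:ℝ))^2 + (n:ℝ)^2 with hB_def
    have hjB : 0 < jb B := jb_pos _
    have hkB : jb (k:ℝ) ^ 2 ≤ Real.sqrt 2 * jb B := by
      apply jb_sq_le
      rw [hB_def]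
      nlinarith [sq_nonneg ((n:ℝ)+(k:ℝ)), sq_nonneg (n:ℝ)]
    have hnB : jb (n:ℝ) ^ 2 ≤ Real.sqrt 2 * jb B := by
      apply jb_sq_le
      rw [hB_def]
      nlinarith [sq_nonneg ((n:ℝ)+(k:ℝ)), sq_nonneg (k:ℝ)]
    have hjb_natAbs : jb (n:ℝ) = jb (n.natAbs : ℝ) := jb_natAbs n
    by_cases hcase : n.natAbs ≤ K
    · -- region 1 : |n| ≤ |k|
      have hnk2 : (n:ℝ)^2 ≤ (k:ℝ)^2 := by
        have h1 : (n.natAbs:ℝ) ≤ (K:ℝ) := by exact_mod_cast hcase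
        have h2 : ((n.natAbs:ℝ))^2 ≤ ((K:ℝ))^2 :=
          pow_le_pow_left₀ (Nat.cast_nonneg _) h1 2
        rw [Nat.cast_natAbs, Int.cast_abs, sq_abs] at h2
        rw [← hKk2]; exact h2
      have h1 : jb ((n:ℝ)+(k:ℝ)) ≤ 2 * jb (k:ℝ) := by
        apply le_of_sq_le_sq' _ (jb_nonneg _) (mul_nonneg (by norm_num) (jb_nonneg _))
        rw [mul_pow, jb_sq, jb_sq]
        nlinarith [sq_nonneg ((n:ℝ)-(k:ℝ))]
      have A1 : jb ((n:ℝ)+(k:ℝ)) ^ (2*σ) ≤ 2 * jb (k:ℝ) ^ (2*σ) := by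
        calc jb ((n:ℝ)+(k:ℝ)) ^ (2*σ) ≤ (2 * jb (k:ℝ)) ^ (2*σ) :=
              Real.rpow_le_rpow (jb_nonneg _) h1 (by linarith)
          _ = (2:ℝ) ^ (2*σ) * jb (k:ℝ) ^ (2*σ) := Real.mul_rpow hsq2 hjk0.le
          _ ≤ 2 * jb (k:ℝ) ^ (2*σ) := by
              have h2σ : (2:ℝ) ^ (2*σ) ≤ (2:ℝ) ^ (1:ℝ) :=
                Real.rpow_le_rpow_of_exponent_le one_le_two (by linarith)
              rw [Real.rpow_one] at h2σ
              exact mul_le_mul_of_nonneg_right h2σ (Real.rpow_nonneg hjk0.le _)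
      have hXpos : 0 < jb (k:ℝ) ^ ((2:ℝ) - 4*ε) := Real.rpow_pos_of_pos hjk0 _
      have hX : jb (k:ℝ) ^ ((2:ℝ) - 4*ε) ≤ 2 * jb B ^ (1 - 2*ε) := by
        have e1 : jb (k:ℝ) ^ ((2:ℝ) - 4*ε) = (jb (k:ℝ) ^ 2) ^ ((1:ℝ) - 2*ε) := by
          rw [← Real.rpow_natCast (jb (k:ℝ)) 2, ← Real.rpow_mul hjk0.le]
          congr 1; push_cast; ring
        rw [e1]
        calc (jb (k:ℝ) ^ 2) ^ ((1:ℝ) - 2*ε) ≤ (Real.sqrt 2 * jb B) ^ ((1:ℝ) - 2*ε) :=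
              Real.rpow_le_rpow (by positivity) hkB (by linarith)
          _ = Real.sqrt 2 ^ ((1:ℝ) - 2*ε) * jb B ^ ((1:ℝ) - 2*ε) :=
              Real.mul_rpow (by positivity) (jb_nonneg _)
          _ ≤ 2 * jb B ^ (1 - 2*ε) := by
              have hh : Real.sqrt 2 ^ ((1:ℝ) - 2*ε) ≤ Real.sqrt 2 ^ (1:ℝ) :=
                Real.rpow_le_rpow_of_exponent_le hsqrt2 (by linarith)
              rw [Real.rpow_one] at hh
              exact mul_le_mul_of_nonneg_right (le_trans hh hsqrt2le2)
                (Real.rpow_nonneg (jb_nonneg _) _)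
      have A2 : jb B ^ (-(1 - 2*ε)) ≤ 2 * jb (k:ℝ) ^ (-((2:ℝ) - 4*ε)) := by
        rw [Real.rpow_neg (jb_nonneg B), Real.rpow_neg hjk0.le]
        exact inv_le_c_mul_inv hXpos two_pos hX
      have comb : F n ≤ (2 * jb (k:ℝ) ^ (2*σ)) * jb (n:ℝ) ^ (-(2*σ))
          * (2 * jb (k:ℝ) ^ (-((2:ℝ) - 4*ε))) := by
        simp only [hF_def]
        apply mul_le_mul _ A2 (Real.rpow_nonneg (jb_nonneg _) _)
          (mul_nonneg (mul_nonneg (by norm_num) (Real.rpow_nonneg hjk0.le _))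
            (Real.rpow_nonneg (jb_nonneg _) _))
        exact mul_le_mul_of_nonneg_right A1 (Real.rpow_nonneg (jb_nonneg _) _)
      have hmerge : jb (k:ℝ) ^ (2*σ) * jb (k:ℝ) ^ (-((2:ℝ) - 4*ε))
          = jb (k:ℝ) ^ (2*σ - 2 + 4*ε) := by
        rw [← Real.rpow_add hjk0]; congr 1; ring
      have hW1val : W1 n.natAbs = jb (n:ℝ) ^ (-(2*σ)) := by
        simp only [hW1_def]
        simp only [if_pos hcase]
        rw [← hjb_natAbs]
        congr 1
        rw [ht_def]; ring
      have hW2val : W2 n.natAbs = 0 := by simp only [hW2_def]; simp only [if_pos hcase]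
      rw [hW1val, hW2val, mul_zero, add_zero, hc1_def]
      calc F n ≤ (2 * jb (k:ℝ) ^ (2*σ)) * jb (n:ℝ) ^ (-(2*σ))
          * (2 * jb (k:ℝ) ^ (-((2:ℝ) - 4*ε))) := comb
        _ = 4 * (jb (k:ℝ) ^ (2*σ) * jb (k:ℝ) ^ (-((2:ℝ) - 4*ε))) * jb (n:ℝ) ^ (-(2*σ)) := by
            ring
        _ = 4 * jb (k:ℝ) ^ (2*σ - 2 + 4*ε) * jb (n:ℝ) ^ (-(2*σ)) := by rw [hmerge]
    · -- region 2 : |n| > |k|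
      have hkn2 : (k:ℝ)^2 ≤ (n:ℝ)^2 := by
        push_neg at hcase
        have h1 : (K:ℝ) ≤ (n.natAbs:ℝ) := by exact_mod_cast hcase.le
        have hn2 : ((n.natAbs:ℝ))^2 = ((n:ℝ))^2 := by
          rw [Nat.cast_natAbs, Int.cast_abs, sq_abs]
        calc (k:ℝ)^2 = (K:ℝ)^2 := hKk2.symm
          _ ≤ ((n.natAbs:ℝ))^2 := pow_le_pow_left₀ (Nat.cast_nonneg _) h1 2
          _ = (n:ℝ)^2 := hn2
      have h1 : jb ((n:ℝ)+(k:ℝ)) ≤ 2 * jb (n:ℝ) := by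
        apply le_of_sq_le_sq' _ (jb_nonneg _) (mul_nonneg (by norm_num) (jb_nonneg _))
        rw [mul_pow, jb_sq, jb_sq]
        nlinarith [sq_nonneg ((n:ℝ)-(k:ℝ))]
      have A1 : jb ((n:ℝ)+(k:ℝ)) ^ (2*σ) ≤ 2 * jb (n:ℝ) ^ (2*σ) := by
        calc jb ((n:ℝ)+(k:ℝ)) ^ (2*σ) ≤ (2 * jb (n:ℝ)) ^ (2*σ) :=
              Real.rpow_le_rpow (jb_nonneg _) h1 (by linarith)
          _ = (2:ℝ) ^ (2*σ) * jb (n:ℝ) ^ (2*σ) := Real.mul_rpow hsq2 hjn.le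
          _ ≤ 2 * jb (n:ℝ) ^ (2*σ) := by
              have h2σ : (2:ℝ) ^ (2*σ) ≤ (2:ℝ) ^ (1:ℝ) :=
                Real.rpow_le_rpow_of_exponent_le one_le_two (by linarith)
              rw [Real.rpow_one] at h2σ
              exact mul_le_mul_of_nonneg_right h2σ (Real.rpow_nonneg hjn.le _)
      have B1 : jb ((n:ℝ)+(k:ℝ)) ^ (2*σ) * jb (n:ℝ) ^ (-(2*σ)) ≤ 2 := by
        calc jb ((n:ℝ)+(k:ℝ)) ^ (2*σ) * jb (n:ℝ) ^ (-(2*σ))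
            ≤ (2 * jb (n:ℝ) ^ (2*σ)) * jb (n:ℝ) ^ (-(2*σ)) :=
              mul_le_mul_of_nonneg_right A1 (Real.rpow_nonneg (jb_nonneg _) _)
          _ = 2 * (jb (n:ℝ) ^ (2*σ) * jb (n:ℝ) ^ (-(2*σ))) := by ring
          _ = 2 := by
              rw [← Real.rpow_add hjn, show 2*σ + -(2*σ) = 0 by ring, Real.rpow_zero, mul_one]
      have hc1' : jb (k:ℝ) ^ s ≤ Real.sqrt 2 * jb B ^ (s/2) := by
        have e1 : jb (k:ℝ) ^ s = (jb (k:ℝ) ^ 2) ^ (s/2) := by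
          rw [← Real.rpow_natCast (jb (k:ℝ)) 2, ← Real.rpow_mul hjk0.le]
          congr 1; push_cast; ring
        rw [e1]
        calc (jb (k:ℝ) ^ 2) ^ (s/2) ≤ (Real.sqrt 2 * jb B) ^ (s/2) :=
              Real.rpow_le_rpow (by positivity) hkB (by linarith)
          _ = Real.sqrt 2 ^ (s/2) * jb B ^ (s/2) := Real.mul_rpow (by positivity) (jb_nonneg _)
          _ ≤ Real.sqrt 2 * jb B ^ (s/2) := by
              have hh : Real.sqrt 2 ^ (s/2) ≤ Real.sqrt 2 ^ (1:ℝ) :=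
                Real.rpow_le_rpow_of_exponent_le hsqrt2 (by linarith)
              rw [Real.rpow_one] at hh
              exact mul_le_mul_of_nonneg_right hh (Real.rpow_nonneg (jb_nonneg _) _)
      have hc2' : jb (n:ℝ) ^ (1+s) ≤ Real.sqrt 2 * jb B ^ ((1+s)/2) := by
        have e1 : jb (n:ℝ) ^ (1+s) = (jb (n:ℝ) ^ 2) ^ ((1+s)/2) := by
          rw [← Real.rpow_natCast (jb (n:ℝ)) 2, ← Real.rpow_mul hjn.le]
          congr 1; push_cast; ring
        rw [e1]
        calc (jb (n:ℝ) ^ 2) ^ ((1+s)/2) ≤ (Real.sqrt 2 * jb B) ^ ((1+s)/2) :=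
              Real.rpow_le_rpow (by positivity) hnB (by linarith)
          _ = Real.sqrt 2 ^ ((1+s)/2) * jb B ^ ((1+s)/2) :=
              Real.mul_rpow (by positivity) (jb_nonneg _)
          _ ≤ Real.sqrt 2 * jb B ^ ((1+s)/2) := by
              have hh : Real.sqrt 2 ^ ((1+s)/2) ≤ Real.sqrt 2 ^ (1:ℝ) :=
                Real.rpow_le_rpow_of_exponent_le hsqrt2 (by linarith)
              rw [Real.rpow_one] at hh
              exact mul_le_mul_of_nonneg_right hh (Real.rpow_nonneg (jb_nonneg _) _)
      have hXpos2 : 0 < jb (k:ℝ) ^ s * jb (n:ℝ) ^ (1+s) :=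
        mul_pos (Real.rpow_pos_of_pos hjk0 _) (Real.rpow_pos_of_pos hjn _)
      have hX2 : jb (k:ℝ) ^ s * jb (n:ℝ) ^ (1+s) ≤ 2 * jb B ^ (1 - 2*ε) := by
        calc jb (k:ℝ) ^ s * jb (n:ℝ) ^ (1+s)
            ≤ (Real.sqrt 2 * jb B ^ (s/2)) * (Real.sqrt 2 * jb B ^ ((1+s)/2)) :=
              mul_le_mul hc1' hc2' (Real.rpow_nonneg (jb_nonneg _) _)
                (mul_nonneg (Real.sqrt_nonneg _) (Real.rpow_nonneg (jb_nonneg _) _))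
          _ = (Real.sqrt 2 * Real.sqrt 2) * (jb B ^ (s/2) * jb B ^ ((1+s)/2)) := by ring
          _ = 2 * jb B ^ (1 - 2*ε) := by
              rw [Real.mul_self_sqrt hsq2, ← Real.rpow_add hjB,
                show s/2 + (1+s)/2 = 1 - 2*ε by rw [hs_def]; ring]
      have B2 : jb B ^ (-(1 - 2*ε)) ≤ 2 * (jb (k:ℝ) ^ s * jb (n:ℝ) ^ (1+s))⁻¹ := by
        rw [Real.rpow_neg (jb_nonneg B)]
        exact inv_le_c_mul_inv hXpos2 two_pos hX2
      have comb : F n ≤ 2 * (2 * (jb (k:ℝ) ^ s * jb (n:ℝ) ^ (1+s))⁻¹) := by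
        simp only [hF_def]
        exact mul_le_mul B1 B2 (Real.rpow_nonneg (jb_nonneg _) _) (by norm_num)
      have hfin : 2 * (2 * (jb (k:ℝ) ^ s * jb (n:ℝ) ^ (1+s))⁻¹)
          = 4 * jb (k:ℝ) ^ (-s) * jb (n:ℝ) ^ (-(1+s)) := by
        rw [mul_inv, Real.rpow_neg hjk0.le, Real.rpow_neg hjn.le]
        ring
      have hW1val : W1 n.natAbs = 0 := by simp only [hW1_def]; simp only [if_neg hcase]
      have hW2val : W2 n.natAbs = jb (n:ℝ) ^ (-(1+s)) := by
        simp only [hW2_def]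
        simp only [if_neg hcase]
        rw [← hjb_natAbs]
      rw [hW1val, hW2val, mul_zero, zero_add, hc2_def]
      calc F n ≤ 2 * (2 * (jb (k:ℝ) ^ s * jb (n:ℝ) ^ (1+s))⁻¹) := comb
        _ = 4 * jb (k:ℝ) ^ (-s) * jb (n:ℝ) ^ (-(1+s)) := hfin
        _ = 4 * jb (k:ℝ) ^ (-s) * jb (n:ℝ) ^ (-(1+s)) := rfl
  -- summation
  set N : ℕ := u.sup Int.natAbs + 1 with hN_def
  have hNu : ∀ n ∈ u, n.natAbs < N := fun n hn => Nat.lt_succ_of_le (Finset.le_sup hn)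
  have S1 : ∑ n ∈ u, W1 n.natAbs ≤ 2 * (1 + (K:ℝ)^t / t) := by
    refine le_trans (sum_natAbs_le W1 hW1nn u N hNu) ?_
    have hL := L1 ht0 ht1 K N
    simp only [hW1_def]
    linarith
  have S2 : ∑ n ∈ u, W2 n.natAbs ≤ 2 * (2 * ((K:ℝ) + 1) ^ (-s) / s) := by
    refine le_trans (sum_natAbs_le W2 hW2nn u N hNu) ?_
    have hL := L2 hs0 hs1 K N
    simp only [hW2_def]
    linarith
  -- final bounds
  have hKt : (K:ℝ)^t ≤ jb (k:ℝ) ^ t := Real.rpow_le_rpow (Nat.cast_nonneg K) hKjk ht0.le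
  have h1t : (1:ℝ) ≤ jb (k:ℝ) ^ t := by
    calc (1:ℝ) = jb (k:ℝ) ^ (0:ℝ) := (Real.rpow_zero _).symm
      _ ≤ jb (k:ℝ) ^ t := Real.rpow_le_rpow_of_exponent_le hjk1 ht0.le
  have hE1 : c1 * (2 * (1 + (K:ℝ)^t / t)) ≤ (8*(1+1/t)) * jb (k:ℝ) ^ (-(1 - 4*ε)) := by
    have hin : 1 + (K:ℝ)^t / t ≤ (1 + 1/t) * jb (k:ℝ) ^ t := by
      have h2 : (K:ℝ)^t / t ≤ jb (k:ℝ)^t / t := by gcongr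
      have h3 : (1 + 1/t) * jb (k:ℝ) ^ t = jb (k:ℝ)^t + jb (k:ℝ)^t / t := by
        field_simp
      rw [h3]; linarith
    have hmerge2 : jb (k:ℝ) ^ (2*σ - 2 + 4*ε) * jb (k:ℝ) ^ t = jb (k:ℝ) ^ (-(1 - 4*ε)) := by
      rw [← Real.rpow_add hjk0]; congr 1; rw [ht_def]; ring
    calc c1 * (2 * (1 + (K:ℝ)^t / t))
        ≤ c1 * (2 * ((1 + 1/t) * jb (k:ℝ) ^ t)) := by
          apply mul_le_mul_of_nonneg_left _ hc1nn
          linarith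
      _ = (8*(1+1/t)) * (jb (k:ℝ) ^ (2*σ - 2 + 4*ε) * jb (k:ℝ) ^ t) := by
          rw [hc1_def]; ring
      _ = (8*(1+1/t)) * jb (k:ℝ) ^ (-(1 - 4*ε)) := by rw [hmerge2]
  have hE2 : c2 * (2 * (2 * ((K:ℝ) + 1) ^ (-s) / s)) ≤ (16/s) * jb (k:ℝ) ^ (-(1 - 4*ε)) := by
    have hK1s : ((K:ℝ) + 1) ^ (-s) ≤ jb (k:ℝ) ^ (-s) :=
      Real.rpow_le_rpow_of_nonpos hjk0 hjkK1 (by linarith)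
    have hmerge3 : jb (k:ℝ) ^ (-s) * jb (k:ℝ) ^ (-s) = jb (k:ℝ) ^ (-(1 - 4*ε)) := by
      rw [← Real.rpow_add hjk0]; congr 1; rw [hs_def]; ring
    calc c2 * (2 * (2 * ((K:ℝ) + 1) ^ (-s) / s))
        = (16/s) * (jb (k:ℝ) ^ (-s) * ((K:ℝ) + 1) ^ (-s)) := by
          rw [hc2_def]; ring
      _ ≤ (16/s) * (jb (k:ℝ) ^ (-s) * jb (k:ℝ) ^ (-s)) := by
          apply mul_le_mul_of_nonneg_left _ (by positivity)
          exact mul_le_mul_of_nonneg_left hK1s (Real.rpow_nonneg hjk0.le _)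
      _ = (16/s) * jb (k:ℝ) ^ (-(1 - 4*ε)) := by rw [hmerge3]
  calc ∑ n ∈ u, F n
      ≤ ∑ n ∈ u, (c1 * W1 n.natAbs + c2 * W2 n.natAbs) :=
        Finset.sum_le_sum (fun n _ => hpt n)
    _ = c1 * (∑ n ∈ u, W1 n.natAbs) + c2 * (∑ n ∈ u, W2 n.natAbs) := by
        rw [Finset.sum_add_distrib, Finset.mul_sum, Finset.mul_sum]
    _ ≤ c1 * (2 * (1 + (K:ℝ)^t / t)) + c2 * (2 * (2 * ((K:ℝ) + 1) ^ (-s) / s)) :=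
        add_le_add (mul_le_mul_of_nonneg_left S1 hc1nn) (mul_le_mul_of_nonneg_left S2 hc2nn)
    _ ≤ (8*(1+1/t)) * jb (k:ℝ) ^ (-(1 - 4*ε)) + (16/s) * jb (k:ℝ) ^ (-(1 - 4*ε)) :=
        add_le_add hE1 hE2
    _ = (8 * (1 + 1 / t) + 16 / s) * jb (k:ℝ) ^ (-(1 - 4*ε)) := by ring
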